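/- arXiv:1504.05834 — 3 statements merged into one kernel-verified Lean document; each statement's English description precedes it below -/
import Mathlib

section
/- Let σ_0, σ_1, κ_0, κ_1 be positive reals, set σ = σ_0 + σ_1 and κ = κ_0 + κ_1, and for i ∈ {0,1} define γ_i(s) = (σ_i s)²/(1 − κ_i s) for s ∈ [0, 1/κ_i). For t ∈ [0, 1/κ), let u = (σ_0/σ)(1 − κt) + κ_0 t. Then u ∈ (0,1), 1 − u = (σ_1/σ)(1 − κt) + κ_1 t, t/u < 1/κ_0, t/(1−u) < 1/κ_1, and u·γ_0(t/u) + (1−u)·γ_1(t/(1−u)) = (σ t)² / (1 − κ t). -/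
open MeasureTheory ProbabilityTheory Matrix Set Real

noncomputable section

instance matMS {d : ℕ} : MeasurableSpace (Matrix (Fin d) (Fin d) ℝ) :=
  show MeasurableSpace (Fin d → Fin d → ℝ) from inferInstance

/-- The β-dependence (absolute regularity) coefficient between two sub-σ-algebras:
`β(𝒜,ℬ) = (1/2) sup Σᵢ Σⱼ |P(Aᵢ ∩ Bⱼ) − P(Aᵢ)P(Bⱼ)|`, the supremum running over all
finite partitions `(Aᵢ)` of `Ω` with elements in `𝒜` and `(Bⱼ)` with elements in `ℬ`. -/
def betaMix {Ω : Type*} [MeasurableSpace Ω] (μ : Measure Ω)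
    (m₁ m₂ : MeasurableSpace Ω) : ℝ :=
  (1 / 2) * sSup { r : ℝ |
    ∃ (n m : ℕ) (A : Fin n → Set Ω) (B : Fin m → Set Ω),
      (∀ i, MeasurableSet[m₁] (A i)) ∧ (∀ j, MeasurableSet[m₂] (B j)) ∧
      Pairwise (Function.onFun Disjoint A) ∧ Pairwise (Function.onFun Disjoint B) ∧
      (⋃ i, A i) = Set.univ ∧ (⋃ j, B j) = Set.univ ∧
      r = ∑ i : Fin n, ∑ j : Fin m,
        |(μ (A i ∩ B j)).toReal - (μ (A i)).toReal * (μ (B j)).toReal| }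

/-- Largest eigenvalue of a (self-adjoint) matrix: the supremum of its real spectrum. -/
def lambdaMax {d : ℕ} (A : Matrix (Fin d) (Fin d) ℝ) : ℝ := sSup (spectrum ℝ A)

/-- Smallest eigenvalue of a (self-adjoint) matrix: the infimum of its real spectrum. -/
def lambdaMin {d : ℕ} (A : Matrix (Fin d) (Fin d) ℝ) : ℝ := sInf (spectrum ℝ A)

/-- Entrywise expectation of a random matrix. -/
def matMean {Ω : Type*} [MeasurableSpace Ω] (μ : Measure Ω) {d : ℕ}
    (X : Ω → Matrix (Fin d) (Fin d) ℝ) : Matrix (Fin d) (Fin d) ℝ :=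
  Matrix.of fun i j => ∫ ω, X ω i j ∂μ

/-- Matrix exponential. -/
def mexp {d : ℕ} (A : Matrix (Fin d) (Fin d) ℝ) : Matrix (Fin d) (Fin d) ℝ :=
  NormedSpace.exp A

/-- σ-algebra generated by a family of random variables indexed by a set. -/
def sigmaOf {Ω ι E : Type*} [MeasurableSpace Ω] [MeasurableSpace E]
    (X : ι → Ω → E) (S : Set ι) : MeasurableSpace Ω :=
  ⨆ i ∈ S, MeasurableSpace.comap (X i) inferInstance

/-- The factor `γ(c,n) = (log n / log 2) · max(2, 32 log n / (c log 2))`. -/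
def gammaCN (c : ℝ) (n : ℕ) : ℝ :=
  (Real.log n / Real.log 2) * max 2 (32 * Real.log n / (c * Real.log 2))

/-- `v² = sup_{∅ ≠ K ⊆ {1,…,n}} (1/Card K) λ_max( E (Σ_{i∈K} X_i)² )`. -/
def vSq {Ω : Type*} [MeasurableSpace Ω] (μ : Measure Ω) {d : ℕ}
    (X : ℕ → Ω → Matrix (Fin d) (Fin d) ℝ) (n : ℕ) : ℝ :=
  sSup { r : ℝ | ∃ K : Finset ℕ, K.Nonempty ∧ K ⊆ Finset.Icc 1 n ∧
    r = (K.card : ℝ)⁻¹ * lambdaMax (matMean μ fun ω => (∑ i ∈ K, X i ω) ^ 2) }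

/-- The underlying probability space is rich enough to contain a sequence `(ε_i)_{i∈ℤ}` of
iid random variables with uniform distribution over `[0,1]²`, independent of the family
`(X_i)_{i∈ι}`. -/
def RichEnough {Ω ι E : Type*} [MeasurableSpace Ω] [MeasurableSpace E]
    (μ : Measure Ω) (X : ι → Ω → E) : Prop :=
  ∃ ε : ℤ → Ω → ℝ × ℝ,
    (∀ i, Measurable (ε i)) ∧
    iIndepFun ε μ ∧
    (∀ i, Measure.map (ε i) μ =
      (volume.restrict (Set.Icc (0:ℝ) 1)).prod (volume.restrict (Set.Icc (0:ℝ) 1))) ∧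
    Indep (⨆ i, MeasurableSpace.comap (ε i) inferInstance)
      (⨆ i, MeasurableSpace.comap (X i) inferInstance) μ

/-- Geometric decay of the β-mixing coefficients of a sequence `(X_i)_{i≥1}` of random
matrices: `β_k = sup_{j≥1} β(σ(X_i : i ≤ j), σ(X_i : i ≥ j+k)) ≤ e^{−c(k−1)}` for `k ≥ 1`. -/
def BetaGeomDecay {Ω : Type*} [MeasurableSpace Ω] (μ : Measure Ω) {d : ℕ}
    (X : ℕ → Ω → Matrix (Fin d) (Fin d) ℝ) (c : ℝ) : Prop :=
  ∀ k : ℕ, 1 ≤ k → ∀ j : ℕ, 1 ≤ j →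
    betaMix μ (sigmaOf X {i | 1 ≤ i ∧ i ≤ j}) (sigmaOf X {i | j + k ≤ i}) ≤
      Real.exp (-c * ((k : ℝ) - 1))


lemma interp_aux (σ κ t u : ℝ) (hu : 0 < u) (hd : 0 < u - κ * t) :
    u * ((σ * (t / u)) ^ 2 / (1 - κ * (t / u))) = σ ^ 2 * t ^ 2 / (u - κ * t) := by
  have h1 : 1 - κ * (t / u) = (u - κ * t) / u := by field_simp
  rw [h1]
  field_simp

/-- The algebraic interpolation identity behind the log-Laplace summation lemma:
the optimal split `u` of the time parameter `t` between two branches with parameters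
`(σ₀, κ₀)` and `(σ₁, κ₁)`. -/
theorem interpolation_split_identity
    (σ₀ σ₁ κ₀ κ₁ t : ℝ)
    (hσ₀ : 0 < σ₀) (hσ₁ : 0 < σ₁) (hκ₀ : 0 < κ₀) (hκ₁ : 0 < κ₁)
    (ht0 : 0 ≤ t) (ht : t < 1 / (κ₀ + κ₁)) :
    ∀ u : ℝ, u = σ₀ / (σ₀ + σ₁) * (1 - (κ₀ + κ₁) * t) + κ₀ * t →
      0 < u ∧ u < 1 ∧
      1 - u = σ₁ / (σ₀ + σ₁) * (1 - (κ₀ + κ₁) * t) + κ₁ * t ∧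
      t / u < 1 / κ₀ ∧
      t / (1 - u) < 1 / κ₁ ∧
      u * ((σ₀ * (t / u)) ^ 2 / (1 - κ₀ * (t / u))) +
        (1 - u) * ((σ₁ * (t / (1 - u))) ^ 2 / (1 - κ₁ * (t / (1 - u)))) =
        ((σ₀ + σ₁) * t) ^ 2 / (1 - (κ₀ + κ₁) * t) := by
  intro u hu
  have hs : 0 < σ₀ + σ₁ := by linarith
  have hk : 0 < κ₀ + κ₁ := by linarith
  have h1 : 0 < 1 - (κ₀ + κ₁) * t := by
    have := (lt_div_iff₀ hk).mp ht
    nlinarith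
  have hd0 : u - κ₀ * t = σ₀ / (σ₀ + σ₁) * (1 - (κ₀ + κ₁) * t) := by rw [hu]; ring
  have hd0' : 0 < u - κ₀ * t := by
    rw [hd0]; positivity
  have hu0 : 0 < u := by nlinarith
  have h1u : 1 - u = σ₁ / (σ₀ + σ₁) * (1 - (κ₀ + κ₁) * t) + κ₁ * t := by
    rw [hu]; field_simp; ring
  have hd1 : (1 - u) - κ₁ * t = σ₁ / (σ₀ + σ₁) * (1 - (κ₀ + κ₁) * t) := by
    rw [h1u]; ring
  have hd1' : 0 < (1 - u) - κ₁ * t := by rw [hd1]; positivity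
  have h1u0 : 0 < 1 - u := by nlinarith
  refine ⟨hu0, by linarith, h1u, ?_, ?_, ?_⟩
  · rw [div_lt_div_iff₀ hu0 hκ₀]; nlinarith
  · rw [div_lt_div_iff₀ h1u0 hκ₁]; nlinarith
  · rw [interp_aux σ₀ κ₀ t u hu0 hd0', interp_aux σ₁ κ₁ t (1 - u) h1u0 hd1',
      hd0, hd1]
    field_simp

end
end

section
/- Let X and Y be random variables defined on a probability space (Ω, 𝒜, P), taking values in Borel (standard) spaces B_1 and B_2 respectively. Then β( σ(X), σ(Y) ) = (1/2) ‖ P_{X,Y} − P_X ⊗ P_Y ‖, where P_{X,Y} is the joint distribution of (X,Y), P_X and P_Y are the marginal distributions of X and Y, and ‖μ − ν‖ denotes the total variation of the signed measure μ − ν. -/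
open MeasureTheory ProbabilityTheory Matrix Set Real

noncomputable section

open scoped symmDiff

namespace BetaProof


variable {β γ : Type*}

lemma toReal_measure_biUnion [MeasurableSpace γ] (m : Measure γ) [IsFiniteMeasure m]
    {ι : Type*} (Q : Finset ι) {c : ι → Set γ} (mc : ∀ p, MeasurableSet (c p))
    (hd : Pairwise (Function.onFun Disjoint c)) {T : Set γ} (hT : T = ⋃ p ∈ Q, c p) :
    (m T).toReal = ∑ p ∈ Q, (m (c p)).toReal := by
  rw [hT, measure_biUnion_finset (hd.set_pairwise _) (fun p _ => mc p)]
  exact ENNReal.toReal_sum fun p _ => measure_ne_top m _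

lemma sum_toReal_le_univ [MeasurableSpace γ] (m : Measure γ) [IsFiniteMeasure m]
    {ι : Type*} [Fintype ι] {c : ι → Set γ} (mc : ∀ p, MeasurableSet (c p))
    (hd : Pairwise (Function.onFun Disjoint c)) :
    ∑ p, (m (c p)).toReal ≤ (m univ).toReal := by
  rw [← toReal_measure_biUnion m Finset.univ mc hd (T := ⋃ p ∈ Finset.univ, c p) rfl]
  exact ENNReal.toReal_mono (measure_ne_top m _) (measure_mono (subset_univ _))

lemma abs_sub_le_tv [MeasurableSpace γ] (ν ρ : Measure γ)
    [IsFiniteMeasure ν] [IsFiniteMeasure ρ]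
    {C : Set γ} (hC : MeasurableSet C) :
    |(ν C).toReal - (ρ C).toReal| ≤
      ((ν.toSignedMeasure - ρ.toSignedMeasure).totalVariation C).toReal := by
  set s := ν.toSignedMeasure - ρ.toSignedMeasure with hs
  have h1 : s C = (ν C).toReal - (ρ C).toReal := Measure.toSignedMeasure_sub_apply hC
  have h2 : s C = (s.toJordanDecomposition.posPart C).toReal
      - (s.toJordanDecomposition.negPart C).toReal := by
    conv_lhs => rw [← s.toSignedMeasure_toJordanDecomposition,
      JordanDecomposition.toSignedMeasure]
    exact Measure.toSignedMeasure_sub_apply hC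
  haveI := s.toJordanDecomposition.posPart_finite
  haveI := s.toJordanDecomposition.negPart_finite
  rw [← h1, h2, SignedMeasure.totalVariation, Measure.add_apply,
    ENNReal.toReal_add (measure_ne_top _ _) (measure_ne_top _ _)]
  have hp : 0 ≤ (s.toJordanDecomposition.posPart C).toReal := ENNReal.toReal_nonneg
  have hn : 0 ≤ (s.toJordanDecomposition.negPart C).toReal := ENNReal.toReal_nonneg
  rw [abs_sub_le_iff]; constructor <;> linarith

lemma prob_compl_toReal [MeasurableSpace γ] (m : Measure γ) [IsProbabilityMeasure m]
    {F : Set γ} (hF : MeasurableSet F) : (m Fᶜ).toReal = 1 - (m F).toReal := by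
  rw [prob_compl_eq_one_sub hF, ENNReal.toReal_sub_of_le prob_le_one ENNReal.one_ne_top,
    ENNReal.toReal_one]

lemma tv_univ_eq [MeasurableSpace γ] (ν ρ : Measure γ)
    [IsProbabilityMeasure ν] [IsProbabilityMeasure ρ] :
    ∃ E : Set γ, MeasurableSet E ∧
      ((ν.toSignedMeasure - ρ.toSignedMeasure).totalVariation univ).toReal
        = 2 * ((ν E).toReal - (ρ E).toReal) := by
  set s := ν.toSignedMeasure - ρ.toSignedMeasure with hsdef
  obtain ⟨E, hE₁, hE₂, hE₃, hpos, hneg⟩ := s.toJordanDecomposition_spec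
  refine ⟨E, hE₁, ?_⟩
  have hsE : s E = (ν E).toReal - (ρ E).toReal := Measure.toSignedMeasure_sub_apply hE₁
  have hsEc : s Eᶜ = (ν Eᶜ).toReal - (ρ Eᶜ).toReal :=
    Measure.toSignedMeasure_sub_apply hE₁.compl
  have hp : (s.toJordanDecomposition.posPart univ).toReal = s E := by
    rw [hpos, SignedMeasure.toMeasureOfZeroLE_apply _ hE₂ hE₁ MeasurableSet.univ]
    simp [Set.inter_univ]
  have hn : (s.toJordanDecomposition.negPart univ).toReal = - s Eᶜ := by
    rw [hneg, SignedMeasure.toMeasureOfLEZero_apply _ hE₃ hE₁.compl MeasurableSet.univ]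
    simp [Set.inter_univ]
  haveI := s.toJordanDecomposition.posPart_finite
  haveI := s.toJordanDecomposition.negPart_finite
  have htv : ((s.totalVariation) univ).toReal = s E - s Eᶜ := by
    rw [SignedMeasure.totalVariation, Measure.add_apply,
      ENNReal.toReal_add (measure_ne_top _ _) (measure_ne_top _ _), hp, hn]
    ring
  have hν : (ν Eᶜ).toReal = 1 - (ν E).toReal := prob_compl_toReal ν hE₁
  have hρ : (ρ Eᶜ).toReal = 1 - (ρ E).toReal := prob_compl_toReal ρ hE₁
  rw [htv, hsE, hsEc, hν, hρ]; ring

lemma lower_sum [MeasurableSpace γ] (ν ρ : Measure γ)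
    [IsProbabilityMeasure ν] [IsProbabilityMeasure ρ]
    {F : Set γ} (hF : MeasurableSet F)
    {ι : Type*} [Fintype ι] (c : ι → Set γ) (mc : ∀ p, MeasurableSet (c p))
    (hd : Pairwise (Function.onFun Disjoint c)) (hcov : (⋃ p, c p) = univ)
    (hcell : ∀ p, c p ⊆ F ∨ c p ∩ F = ∅) :
    2 * ((ν F).toReal - (ρ F).toReal) ≤ ∑ p, |(ν (c p)).toReal - (ρ (c p)).toReal| := by
  classical
  set P : Finset ι := Finset.univ.filter (fun p => c p ⊆ F) with hP
  set Pn : Finset ι := Finset.univ.filter (fun p => ¬ c p ⊆ F) with hPn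
  have hmem : ∀ x : γ, ∃ p, x ∈ c p := fun x => mem_iUnion.1 (hcov ▸ mem_univ x)
  have hFeq : F = ⋃ p ∈ P, c p := by
    ext x
    constructor
    · intro hx
      obtain ⟨p, hp⟩ := hmem x
      have hsub : c p ⊆ F := by
        rcases hcell p with h | h
        · exact h
        · exact absurd (show x ∈ c p ∩ F from ⟨hp, hx⟩) (by simp [h])
      exact Set.mem_biUnion (Finset.mem_filter.2 ⟨Finset.mem_univ _, hsub⟩) hp
    · intro hx
      obtain ⟨p, hp, hxp⟩ := mem_iUnion₂.1 hx
      exact (Finset.mem_filter.1 hp).2 hxp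
  have hFceq : Fᶜ = ⋃ p ∈ Pn, c p := by
    ext x
    constructor
    · intro hx
      obtain ⟨p, hp⟩ := hmem x
      refine Set.mem_biUnion (Finset.mem_filter.2 ⟨Finset.mem_univ _, fun hsub => hx (hsub hp)⟩) hp
    · intro hx
      obtain ⟨p, hp, hxp⟩ := mem_iUnion₂.1 hx
      have hnsub : ¬ c p ⊆ F := by
        simpa [hPn] using hp
      rcases hcell p with h | h
      · exact absurd h hnsub
      · intro hxF
        exact absurd (show x ∈ c p ∩ F from ⟨hxp, hxF⟩) (by simp [h])
  have hν1 : (ν F).toReal = ∑ p ∈ P, (ν (c p)).toReal :=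
    toReal_measure_biUnion ν P mc hd hFeq
  have hρ1 : (ρ F).toReal = ∑ p ∈ P, (ρ (c p)).toReal :=
    toReal_measure_biUnion ρ P mc hd hFeq
  have hν2 : (ν Fᶜ).toReal = ∑ p ∈ Pn, (ν (c p)).toReal :=
    toReal_measure_biUnion ν Pn mc hd hFceq
  have hρ2 : (ρ Fᶜ).toReal = ∑ p ∈ Pn, (ρ (c p)).toReal :=
    toReal_measure_biUnion ρ Pn mc hd hFceq
  have hνc : (ν Fᶜ).toReal = 1 - (ν F).toReal := prob_compl_toReal ν hF
  have hρc : (ρ Fᶜ).toReal = 1 - (ρ F).toReal := prob_compl_toReal ρ hF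
  have hsplit : ∑ p ∈ P, |(ν (c p)).toReal - (ρ (c p)).toReal|
      + ∑ p ∈ Pn, |(ν (c p)).toReal - (ρ (c p)).toReal|
      = ∑ p, |(ν (c p)).toReal - (ρ (c p)).toReal| :=
    Finset.sum_filter_add_sum_filter_not Finset.univ (fun p => c p ⊆ F)
      (fun p => |(ν (c p)).toReal - (ρ (c p)).toReal|)
  have h1 : ∑ p ∈ P, ((ν (c p)).toReal - (ρ (c p)).toReal)
      ≤ ∑ p ∈ P, |(ν (c p)).toReal - (ρ (c p)).toReal| :=
    Finset.sum_le_sum fun p _ => le_abs_self _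
  have h2 : ∑ p ∈ Pn, ((ρ (c p)).toReal - (ν (c p)).toReal)
      ≤ ∑ p ∈ Pn, |(ν (c p)).toReal - (ρ (c p)).toReal| :=
    Finset.sum_le_sum fun p _ => by rw [abs_sub_comm]; exact le_abs_self _
  have e1 : ∑ p ∈ P, ((ν (c p)).toReal - (ρ (c p)).toReal)
      = (ν F).toReal - (ρ F).toReal := by
    rw [Finset.sum_sub_distrib, ← hν1, ← hρ1]
  have e2 : ∑ p ∈ Pn, ((ρ (c p)).toReal - (ν (c p)).toReal)
      = (ν F).toReal - (ρ F).toReal := by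
    rw [Finset.sum_sub_distrib, ← hν2, ← hρ2, hνc, hρc]
    ring
  have hfinal := add_le_add h1 h2
  rw [e1, e2, hsplit] at hfinal
  linarith




variable {β γ : Type*}

/-- atom with membership pattern σ -/
def atomOf {N : ℕ} (A : Fin N → Set β) (σ : Fin N → Bool) : Set β :=
  {x | ∀ k, x ∈ A k ↔ σ k = true}

lemma measurableSet_atomOf [MeasurableSpace β] {N : ℕ} {A : Fin N → Set β}
    (hA : ∀ k, MeasurableSet (A k)) (σ : Fin N → Bool) :
    MeasurableSet (atomOf A σ) := by
  have : atomOf A σ = ⋂ k, (if σ k then A k else (A k)ᶜ) := by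
    ext x
    simp only [atomOf, mem_iInter, mem_setOf_eq]
    refine forall_congr' fun k => ?_
    cases h : σ k <;> simp [h]
  rw [this]
  exact MeasurableSet.iInter fun k => by
    by_cases h : σ k = true <;> simp [h, hA k, (hA k).compl]

lemma atomOf_disjoint {N : ℕ} (A : Fin N → Set β) :
    Pairwise (Function.onFun Disjoint (atomOf A)) := by
  intro σ τ hst
  rw [Function.onFun, Set.disjoint_left]
  intro x hx hx'
  apply hst
  funext k
  rw [← Bool.coe_iff_coe, ← hx k, ← hx' k]

lemma atomOf_cover {N : ℕ} (A : Fin N → Set β) : (⋃ σ, atomOf A σ) = univ := by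
  ext x
  simp only [mem_iUnion, mem_univ, iff_true]
  classical
  exact ⟨fun k => decide (x ∈ A k), fun k => by simp⟩

/-- F depends only on membership patterns relative to (A, B). -/
def Cyl {N : ℕ} (A : Fin N → Set β) (B : Fin N → Set γ) (F : Set (β × γ)) : Prop :=
  ∀ p q : β × γ, (∀ k, p.1 ∈ A k ↔ q.1 ∈ A k) → (∀ k, p.2 ∈ B k ↔ q.2 ∈ B k) →
    (p ∈ F ↔ q ∈ F)

lemma cyl_of_generateSetAlgebra {F : Set (β × γ)}
    [MeasurableSpace β] [MeasurableSpace γ]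
    (hF : F ∈ MeasureTheory.generateSetAlgebra
      (Set.image2 (· ×ˢ ·) { s : Set β | MeasurableSet s } { t : Set γ | MeasurableSet t })) :
    ∃ (N : ℕ) (A : Fin N → Set β) (B : Fin N → Set γ),
      (∀ k, MeasurableSet (A k)) ∧ (∀ k, MeasurableSet (B k)) ∧ Cyl A B F := by
  induction hF with
  | base s s_mem =>
    obtain ⟨a, ha, b, hb, rfl⟩ := s_mem
    refine ⟨1, fun _ => a, fun _ => b, fun _ => ha, fun _ => hb, ?_⟩
    intro p q h1 h2
    simp only [Set.mem_prod]
    rw [h1 0, h2 0]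
  | empty => exact ⟨0, fun k => ∅, fun k => ∅, fun k => k.elim0, fun k => k.elim0,
      fun p q _ _ => Iff.rfl⟩
  | compl s _ ih =>
    obtain ⟨N, A, B, hA, hB, hc⟩ := ih
    exact ⟨N, A, B, hA, hB, fun p q h1 h2 => not_congr (hc p q h1 h2)⟩
  | union s t _ _ ihs iht =>
    obtain ⟨N₁, A₁, B₁, hA₁, hB₁, hc₁⟩ := ihs
    obtain ⟨N₂, A₂, B₂, hA₂, hB₂, hc₂⟩ := iht
    refine ⟨N₁ + N₂, Fin.append A₁ A₂, Fin.append B₁ B₂, ?_, ?_, ?_⟩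
    · intro k
      refine Fin.addCases (fun i => ?_) (fun i => ?_) k
      · rw [Fin.append_left]; exact hA₁ i
      · rw [Fin.append_right]; exact hA₂ i
    · intro k
      refine Fin.addCases (fun i => ?_) (fun i => ?_) k
      · rw [Fin.append_left]; exact hB₁ i
      · rw [Fin.append_right]; exact hB₂ i
    · intro p q h1 h2
      have e1 : ∀ k : Fin N₁, (p.1 ∈ A₁ k ↔ q.1 ∈ A₁ k) := fun k => by
        have := h1 (Fin.castAdd N₂ k); rwa [Fin.append_left] at this
      have e2 : ∀ k : Fin N₁, (p.2 ∈ B₁ k ↔ q.2 ∈ B₁ k) := fun k => by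
        have := h2 (Fin.castAdd N₂ k); rwa [Fin.append_left] at this
      have e3 : ∀ k : Fin N₂, (p.1 ∈ A₂ k ↔ q.1 ∈ A₂ k) := fun k => by
        have := h1 (Fin.natAdd N₁ k); rwa [Fin.append_right] at this
      have e4 : ∀ k : Fin N₂, (p.2 ∈ B₂ k ↔ q.2 ∈ B₂ k) := fun k => by
        have := h2 (Fin.natAdd N₁ k); rwa [Fin.append_right] at this
      exact or_congr (hc₁ p q e1 e2) (hc₂ p q e3 e4)




variable {β γ : Type*}

lemma disjointify {Ω : Type*} [MeasurableSpace β] {n : ℕ}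
    {X : Ω → β} {A : Fin n → Set Ω} (hd : Pairwise (Function.onFun Disjoint A))
    {A' : Fin n → Set β} (hm : ∀ i, MeasurableSet (A' i)) (hp : ∀ i, X ⁻¹' A' i = A i) :
    ∃ A'' : Fin n → Set β, (∀ i, MeasurableSet (A'' i)) ∧ (∀ i, X ⁻¹' A'' i = A i) ∧
      Pairwise (Function.onFun Disjoint A'') := by
  refine ⟨fun i => A' i \ ⋃ k, ⋃ _ : k < i, A' k, fun i =>
    (hm i).diff (MeasurableSet.iUnion fun k => MeasurableSet.iUnion fun _ => hm k), ?_, ?_⟩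
  · intro i
    have h1 : X ⁻¹' (A' i \ ⋃ k, ⋃ _ : k < i, A' k)
        = A i \ ⋃ k, ⋃ _ : k < i, A k := by
      simp only [Set.preimage_diff, Set.preimage_iUnion, hp]
    rw [h1, sdiff_eq_left.2 ?_]
    rw [Set.disjoint_right]
    intro x hx1 hx2
    obtain ⟨k, hk⟩ := mem_iUnion.1 hx1
    obtain ⟨hki, hxk⟩ := mem_iUnion.1 hk
    exact Set.disjoint_left.1 (hd hki.ne) hxk hx2
  · have key : ∀ i j : Fin n, i < j →
        Disjoint (A' i \ ⋃ k, ⋃ _ : k < i, A' k) (A' j \ ⋃ k, ⋃ _ : k < j, A' k) := by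
      intro i j hij
      rw [Set.disjoint_left]
      rintro x ⟨hxi, _⟩ ⟨_, hxj⟩
      exact hxj (mem_iUnion.2 ⟨i, mem_iUnion.2 ⟨hij, hxi⟩⟩)
    intro i j hij
    rcases hij.lt_or_gt with h | h
    · exact key _ _ h
    · exact (key _ _ h).symm


lemma sSup_eq_tv {Ω B₁ B₂ : Type*} [MeasurableSpace Ω]
    [MeasurableSpace B₁] [MeasurableSpace B₂]
    (μ : Measure Ω) [IsProbabilityMeasure μ]
    (X : Ω → B₁) (Y : Ω → B₂) (hX : Measurable X) (hY : Measurable Y) :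
    sSup { r : ℝ |
      ∃ (n m : ℕ) (A : Fin n → Set Ω) (B : Fin m → Set Ω),
        (∀ i, MeasurableSet[MeasurableSpace.comap X inferInstance] (A i)) ∧
        (∀ j, MeasurableSet[MeasurableSpace.comap Y inferInstance] (B j)) ∧
        Pairwise (Function.onFun Disjoint A) ∧ Pairwise (Function.onFun Disjoint B) ∧
        (⋃ i, A i) = Set.univ ∧ (⋃ j, B j) = Set.univ ∧
        r = ∑ i : Fin n, ∑ j : Fin m,
          |(μ (A i ∩ B j)).toReal - (μ (A i)).toReal * (μ (B j)).toReal| } =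
    (((Measure.map (fun ω => (X ω, Y ω)) μ).toSignedMeasure -
        ((Measure.map X μ).prod (Measure.map Y μ)).toSignedMeasure).totalVariation
      Set.univ).toReal := by
  classical
  have hXY : Measurable fun ω => (X ω, Y ω) := hX.prodMk hY
  set ν : Measure (B₁ × B₂) := Measure.map (fun ω => (X ω, Y ω)) μ with hνdef
  set ρ : Measure (B₁ × B₂) := (Measure.map X μ).prod (Measure.map Y μ) with hρdef
  haveI : IsProbabilityMeasure ν := Measure.isProbabilityMeasure_map hXY.aemeasurable
  haveI : IsProbabilityMeasure (Measure.map X μ) := Measure.isProbabilityMeasure_map hX.aemeasurable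
  haveI : IsProbabilityMeasure (Measure.map Y μ) := Measure.isProbabilityMeasure_map hY.aemeasurable
  haveI : IsProbabilityMeasure ρ := by rw [hρdef]; infer_instance
  set s : SignedMeasure (B₁ × B₂) := ν.toSignedMeasure - ρ.toSignedMeasure with hsdef
  set T : ℝ := (s.totalVariation Set.univ).toReal with hTdef
  haveI htvfin : IsFiniteMeasure s.totalVariation :=
    show IsFiniteMeasure (s.toJordanDecomposition.posPart + s.toJordanDecomposition.negPart)
      from inferInstance
  have cellν : ∀ (a : Set B₁) (b : Set B₂), MeasurableSet a → MeasurableSet b →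
      (ν (a ×ˢ b)).toReal = (μ (X ⁻¹' a ∩ Y ⁻¹' b)).toReal := by
    intro a b ha hb
    rw [hνdef, Measure.map_apply hXY (ha.prod hb), Set.mk_preimage_prod]
  have cellρ : ∀ (a : Set B₁) (b : Set B₂), MeasurableSet a → MeasurableSet b →
      (ρ (a ×ˢ b)).toReal = (μ (X ⁻¹' a)).toReal * (μ (Y ⁻¹' b)).toReal := by
    intro a b ha hb
    rw [hρdef, Measure.prod_prod, ENNReal.toReal_mul,
      Measure.map_apply hX ha, Measure.map_apply hY hb]
  -- upper bound
  have hub : ∀ r ∈ { r : ℝ |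
      ∃ (n m : ℕ) (A : Fin n → Set Ω) (B : Fin m → Set Ω),
        (∀ i, MeasurableSet[MeasurableSpace.comap X inferInstance] (A i)) ∧
        (∀ j, MeasurableSet[MeasurableSpace.comap Y inferInstance] (B j)) ∧
        Pairwise (Function.onFun Disjoint A) ∧ Pairwise (Function.onFun Disjoint B) ∧
        (⋃ i, A i) = Set.univ ∧ (⋃ j, B j) = Set.univ ∧
        r = ∑ i : Fin n, ∑ j : Fin m,
          |(μ (A i ∩ B j)).toReal - (μ (A i)).toReal * (μ (B j)).toReal| }, r ≤ T := by
    rintro r ⟨n, m, A, B, hA, hB, hdA, hdB, hcA, hcB, rfl⟩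
    have hA' := fun i => (MeasurableSpace.measurableSet_comap.1 (hA i))
    choose A' hA'm hA'p using hA'
    have hB' := fun j => (MeasurableSpace.measurableSet_comap.1 (hB j))
    choose B' hB'm hB'p using hB'
    obtain ⟨A'', hA''m, hA''p, hA''d⟩ := disjointify hdA hA'm hA'p
    obtain ⟨B'', hB''m, hB''p, hB''d⟩ := disjointify hdB hB'm hB'p
    obtain ⟨c, hc⟩ : ∃ c : Fin n × Fin m → Set (B₁ × B₂),
        c = fun p => A'' p.1 ×ˢ B'' p.2 := ⟨_, rfl⟩
    have mc : ∀ p, MeasurableSet (c p) := fun p => by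
      rw [hc]; exact (hA''m p.1).prod (hB''m p.2)
    have hcd : Pairwise (Function.onFun Disjoint c) := by
      intro p q hpq
      rw [Function.onFun, hc]
      rcases ne_or_eq p.1 q.1 with h | h
      · exact Disjoint.set_prod_left (hA''d h) _ _
      · exact Disjoint.set_prod_right (hB''d (fun h2 => hpq (Prod.ext h h2))) _ _
    calc ∑ i : Fin n, ∑ j : Fin m,
          |(μ (A i ∩ B j)).toReal - (μ (A i)).toReal * (μ (B j)).toReal|
        = ∑ p : Fin n × Fin m, |(ν (c p)).toReal - (ρ (c p)).toReal| := by
          rw [Fintype.sum_prod_type]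
          refine Finset.sum_congr rfl fun i _ => Finset.sum_congr rfl fun j _ => ?_
          simp only [hc]
          rw [cellν _ _ (hA''m i) (hB''m j), cellρ _ _ (hA''m i) (hB''m j),
            hA''p i, hB''p j]
      _ ≤ ∑ p : Fin n × Fin m, (s.totalVariation (c p)).toReal :=
          Finset.sum_le_sum fun p _ => abs_sub_le_tv ν ρ (mc p)
      _ ≤ (s.totalVariation Set.univ).toReal := sum_toReal_le_univ _ mc hcd
  have hbdd : BddAbove { r : ℝ |
      ∃ (n m : ℕ) (A : Fin n → Set Ω) (B : Fin m → Set Ω),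
        (∀ i, MeasurableSet[MeasurableSpace.comap X inferInstance] (A i)) ∧
        (∀ j, MeasurableSet[MeasurableSpace.comap Y inferInstance] (B j)) ∧
        Pairwise (Function.onFun Disjoint A) ∧ Pairwise (Function.onFun Disjoint B) ∧
        (⋃ i, A i) = Set.univ ∧ (⋃ j, B j) = Set.univ ∧
        r = ∑ i : Fin n, ∑ j : Fin m,
          |(μ (A i ∩ B j)).toReal - (μ (A i)).toReal * (μ (B j)).toReal| } := ⟨T, hub⟩
  refine le_antisymm (Real.sSup_le hub ENNReal.toReal_nonneg) ?_
  refine le_of_forall_sub_le fun ε hε => ?_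
  obtain ⟨E, hE, hTE⟩ := tv_univ_eq ν ρ
  have hgen : (inferInstance : MeasurableSpace (B₁ × B₂)) =
      MeasurableSpace.generateFrom (MeasureTheory.generateSetAlgebra
        (Set.image2 (· ×ˢ ·) { a : Set B₁ | MeasurableSet a }
          { b : Set B₂ | MeasurableSet b })) := by
    rw [generateFrom_generateSetAlgebra_eq, generateFrom_prod]
  have hdense := Measure.MeasureDense.of_generateFrom_isSetAlgebra_finite (μ := ν + ρ)
      isSetAlgebra_generateSetAlgebra hgen
  obtain ⟨F, hFalg, hFd⟩ := hdense.approx E hE (measure_ne_top _ _) (ε/2) (half_pos hε)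
  have hFm : MeasurableSet F := hdense.measurable F hFalg
  obtain ⟨N, AF, BF, hAF, hBF, hcyl⟩ := cyl_of_generateSetAlgebra hFalg
  obtain ⟨c, hc⟩ : ∃ c : (Fin N → Bool) × (Fin N → Bool) → Set (B₁ × B₂),
      c = fun p => atomOf AF p.1 ×ˢ atomOf BF p.2 := ⟨_, rfl⟩
  have mc : ∀ p, MeasurableSet (c p) := fun p => by
    rw [hc]; exact (measurableSet_atomOf hAF p.1).prod (measurableSet_atomOf hBF p.2)
  have hcd : Pairwise (Function.onFun Disjoint c) := by
    intro p q hpq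
    rw [Function.onFun, hc]
    rcases ne_or_eq p.1 q.1 with h | h
    · exact Disjoint.set_prod_left (atomOf_disjoint AF h) _ _
    · exact Disjoint.set_prod_right
        (atomOf_disjoint BF (fun h2 => hpq (Prod.ext h h2))) _ _
  have hcov : (⋃ p, c p) = univ := by
    rw [hc]
    ext z
    simp only [mem_iUnion, mem_univ, iff_true]
    refine ⟨(fun k => decide (z.1 ∈ AF k), fun k => decide (z.2 ∈ BF k)), ?_, ?_⟩
    · intro k; simp [atomOf]
    · intro k; simp [atomOf]
  have hcell : ∀ p, c p ⊆ F ∨ c p ∩ F = ∅ := by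
    intro p
    simp only [hc]
    rcases eq_empty_or_nonempty ((atomOf AF p.1 ×ˢ atomOf BF p.2) ∩ F) with h | h
    · exact Or.inr h
    · left
      obtain ⟨z, hzc, hzF⟩ := h
      intro w hw
      refine (hcyl w z ?_ ?_).2 hzF
      · intro k; rw [hw.1 k, ← hzc.1 k]
      · intro k; rw [hw.2 k, ← hzc.2 k]
  have hls := lower_sum ν ρ hFm c mc hcd hcov hcell
  -- approximation bound
  have hsum : (ν (E ∆ F)).toReal + (ρ (E ∆ F)).toReal ≤ ε / 2 := by
    have h0 : ν (E ∆ F) + ρ (E ∆ F) ≤ ENNReal.ofReal (ε / 2) := by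
      have := le_of_lt hFd
      rwa [Measure.add_apply] at this
    have h1 := ENNReal.toReal_mono ENNReal.ofReal_ne_top h0
    rwa [ENNReal.toReal_add (measure_ne_top _ _) (measure_ne_top _ _),
      ENNReal.toReal_ofReal (le_of_lt (half_pos hε))] at h1
  have happrox : T - ε ≤ 2 * ((ν F).toReal - (ρ F).toReal) := by
    have h1 : ν E ≤ ν F + ν (E ∆ F) := by
      refine le_trans (measure_mono fun x hx => ?_) (measure_union_le _ _)
      by_cases hxF : x ∈ F
      · exact Or.inl hxF
      · exact Or.inr (Set.mem_symmDiff.2 (Or.inl ⟨hx, hxF⟩))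
    have h2 : ρ F ≤ ρ E + ρ (E ∆ F) := by
      refine le_trans (measure_mono fun x hx => ?_) (measure_union_le _ _)
      by_cases hxE : x ∈ E
      · exact Or.inl hxE
      · exact Or.inr (Set.mem_symmDiff.2 (Or.inr ⟨hx, hxE⟩))
    have hν1 : (ν E).toReal ≤ (ν F).toReal + (ν (E ∆ F)).toReal := by
      rw [← ENNReal.toReal_add (measure_ne_top _ _) (measure_ne_top _ _)]
      exact ENNReal.toReal_mono (by finiteness) h1
    have hρ1 : (ρ F).toReal ≤ (ρ E).toReal + (ρ (E ∆ F)).toReal := by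
      rw [← ENNReal.toReal_add (measure_ne_top _ _) (measure_ne_top _ _)]
      exact ENNReal.toReal_mono (by finiteness) h2
    rw [hTdef, hTE]
    linarith
  -- the partition element
  obtain ⟨e⟩ : Nonempty (Fin (Fintype.card (Fin N → Bool)) ≃ (Fin N → Bool)) :=
    ⟨(Fintype.equivFin _).symm⟩
  have hterm : ∀ σ τ : Fin N → Bool,
      |(μ (X ⁻¹' atomOf AF σ ∩ Y ⁻¹' atomOf BF τ)).toReal
        - (μ (X ⁻¹' atomOf AF σ)).toReal * (μ (Y ⁻¹' atomOf BF τ)).toReal|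
      = |(ν (c (σ, τ))).toReal - (ρ (c (σ, τ))).toReal| := by
    intro σ τ
    simp only [hc]
    rw [cellν _ _ (measurableSet_atomOf hAF σ) (measurableSet_atomOf hBF τ),
      cellρ _ _ (measurableSet_atomOf hAF σ) (measurableSet_atomOf hBF τ)]
  have hrS : (∑ p : (Fin N → Bool) × (Fin N → Bool),
      |(ν (c p)).toReal - (ρ (c p)).toReal|) ∈ { r : ℝ |
      ∃ (n m : ℕ) (A : Fin n → Set Ω) (B : Fin m → Set Ω),
        (∀ i, MeasurableSet[MeasurableSpace.comap X inferInstance] (A i)) ∧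
        (∀ j, MeasurableSet[MeasurableSpace.comap Y inferInstance] (B j)) ∧
        Pairwise (Function.onFun Disjoint A) ∧ Pairwise (Function.onFun Disjoint B) ∧
        (⋃ i, A i) = Set.univ ∧ (⋃ j, B j) = Set.univ ∧
        r = ∑ i : Fin n, ∑ j : Fin m,
          |(μ (A i ∩ B j)).toReal - (μ (A i)).toReal * (μ (B j)).toReal| } := by
    refine ⟨Fintype.card (Fin N → Bool), Fintype.card (Fin N → Bool),
      fun i => X ⁻¹' atomOf AF (e i), fun j => Y ⁻¹' atomOf BF (e j),
      fun i => ⟨atomOf AF (e i), measurableSet_atomOf hAF _, rfl⟩,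
      fun j => ⟨atomOf BF (e j), measurableSet_atomOf hBF _, rfl⟩, ?_, ?_, ?_, ?_, ?_⟩
    · intro i j hij
      exact Disjoint.preimage _ (atomOf_disjoint AF (fun h => hij (e.injective h)))
    · intro i j hij
      exact Disjoint.preimage _ (atomOf_disjoint BF (fun h => hij (e.injective h)))
    · ext ω
      simp only [mem_iUnion, mem_univ, iff_true, mem_preimage]
      exact ⟨e.symm (fun k => decide (X ω ∈ AF k)), by
        rw [Equiv.apply_symm_apply]; intro k; simp⟩
    · ext ω
      simp only [mem_iUnion, mem_univ, iff_true, mem_preimage]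
      exact ⟨e.symm (fun k => decide (Y ω ∈ BF k)), by
        rw [Equiv.apply_symm_apply]; intro k; simp⟩
    · calc (∑ p : (Fin N → Bool) × (Fin N → Bool),
            |(ν (c p)).toReal - (ρ (c p)).toReal|)
          = ∑ σ : Fin N → Bool, ∑ τ : Fin N → Bool,
              |(ν (c (σ, τ))).toReal - (ρ (c (σ, τ))).toReal| := by
            rw [Fintype.sum_prod_type]
        _ = ∑ i, ∑ j,
              |(ν (c (e i, e j))).toReal - (ρ (c (e i, e j))).toReal| := by
            rw [← Equiv.sum_comp e (fun σ => ∑ τ : Fin N → Bool,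
              |(ν (c (σ, τ))).toReal - (ρ (c (σ, τ))).toReal|)]
            exact Finset.sum_congr rfl fun i _ =>
              (Equiv.sum_comp e (fun τ =>
                |(ν (c (e i, τ))).toReal - (ρ (c (e i, τ))).toReal|)).symm
        _ = _ := Finset.sum_congr rfl fun i _ => Finset.sum_congr rfl fun j _ =>
              (hterm (e i) (e j)).symm
  have hrT : T - ε ≤ ∑ p : (Fin N → Bool) × (Fin N → Bool),
      |(ν (c p)).toReal - (ρ (c p)).toReal| := le_trans happrox hls
  exact le_trans hrT (le_csSup hbdd hrS)

end BetaProof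

/-- The β-dependence coefficient between `σ(X)` and `σ(Y)` equals half the total
variation of `P_{X,Y} − P_X ⊗ P_Y`. -/
theorem betaMix_eq_half_totalVariation
    {Ω B₁ B₂ : Type*} [MeasurableSpace Ω]
    [MeasurableSpace B₁] [StandardBorelSpace B₁]
    [MeasurableSpace B₂] [StandardBorelSpace B₂]
    (μ : Measure Ω) [IsProbabilityMeasure μ]
    (X : Ω → B₁) (Y : Ω → B₂) (hX : Measurable X) (hY : Measurable Y) :
    betaMix μ (MeasurableSpace.comap X inferInstance)
        (MeasurableSpace.comap Y inferInstance) =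
      (1 / 2) * (((Measure.map (fun ω => (X ω, Y ω)) μ).toSignedMeasure -
          ((Measure.map X μ).prod (Measure.map Y μ)).toSignedMeasure).totalVariation
        Set.univ).toReal := by
  unfold betaMix
  rw [BetaProof.sSup_eq_tv μ X Y hX hY]

end
end

section
/- Let A ≥ 2 be an integer, set δ = log 2 / (2 log A), and assume the set {k ∈ ℕ* : A δ (1−δ)^{k−1}/2^k ≥ 2} is nonempty; let ℓ be its supremum (which is finite). Define n_0 = A and n_j = ⌈ A(1−δ)^j / 2^j ⌉ for j = 1,…,ℓ. Then ℓ ≤ log A / log 2, δ ≤ 1/2, and A − 2^ℓ n_ℓ ≤ A( 1 − (1−δ)^ℓ ) ≤ A δ ℓ ≤ A/2. -/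
open Real

noncomputable section

set_option maxHeartbeats 1000000 in
/-- Parameters of the Cantor-like construction: with `δ = log 2 / (2 log A)` and
`ℓ = sup{k ≥ 1 : Aδ(1−δ)^{k−1}/2^k ≥ 2}`, one has `ℓ ≤ log A / log 2`, `δ ≤ 1/2` and
`A − 2^ℓ n_ℓ ≤ A(1−(1−δ)^ℓ) ≤ Aδℓ ≤ A/2`, where `n_ℓ = ⌈A(1−δ)^ℓ/2^ℓ⌉`. -/
theorem cantor_like_set_cardinality_bounds
    (A : ℕ) (hA : 2 ≤ A) :
    ∀ δ : ℝ, δ = Real.log 2 / (2 * Real.log A) →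
    ∀ S : Set ℕ, S = {k : ℕ | 1 ≤ k ∧ 2 ≤ (A : ℝ) * δ * (1 - δ) ^ (k - 1) / 2 ^ k} →
    S.Nonempty →
    ∀ ℓ : ℕ, ℓ = sSup S →
    ∀ nl : ℕ, nl = ⌈(A : ℝ) * (1 - δ) ^ ℓ / 2 ^ ℓ⌉₊ →
      (ℓ : ℝ) ≤ Real.log A / Real.log 2 ∧
      δ ≤ 1 / 2 ∧
      (A : ℝ) - 2 ^ ℓ * nl ≤ A * (1 - (1 - δ) ^ ℓ) ∧
      (A : ℝ) * (1 - (1 - δ) ^ ℓ) ≤ A * δ * ℓ ∧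
      (A : ℝ) * δ * ℓ ≤ A / 2 := by
  intro δ hδ S hS hSne ℓ hℓ nl hnl
  have hA2 : (2:ℝ) ≤ A := by exact_mod_cast hA
  have hA0 : (0:ℝ) < A := by linarith
  have hlogA : 0 < Real.log A := Real.log_pos (by linarith)
  have hlog2 : 0 < Real.log 2 := Real.log_pos (by norm_num)
  have hδpos : 0 < δ := by rw [hδ]; positivity
  have hlogle : Real.log 2 ≤ Real.log A := Real.log_le_log (by norm_num) hA2
  have hδhalf : δ ≤ 1/2 := by
    rw [hδ, div_le_div_iff₀ (by positivity) (by norm_num)]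
    linarith
  -- key membership bound
  have key : ∀ k ∈ S, ((k:ℝ) + 1) * Real.log 2 ≤ Real.log A := by
    intro k hk
    rw [hS] at hk
    obtain ⟨hk1, hk2⟩ := hk
    have h1 : (1-δ)^(k-1) ≤ 1 := pow_le_one₀ (by linarith) (by linarith)
    have h2pow : (0:ℝ) < 2 ^ k := by positivity
    have hAk : (2:ℝ) * 2 ^ k ≤ A := by
      rw [le_div_iff₀ h2pow] at hk2
      have : (A:ℝ) * δ * (1-δ)^(k-1) ≤ A * 1 * 1 :=
        mul_le_mul (by nlinarith) h1 (pow_nonneg (by linarith) _) (by nlinarith)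
      nlinarith
    have hlogle2 : Real.log (2 * 2 ^ k) ≤ Real.log A :=
      Real.log_le_log (by positivity) hAk
    rw [Real.log_mul (by norm_num) (by positivity), Real.log_pow] at hlogle2
    linarith
  have hbdd : BddAbove S := by
    refine ⟨A, fun k hk => ?_⟩
    have h := key k hk
    have hkA : (k:ℝ) ≤ Real.log A / Real.log 2 := by
      rw [le_div_iff₀ hlog2]; nlinarith
    have hk2 : (k:ℝ) < 2 ^ k := by
      exact_mod_cast Nat.lt_two_pow_self (n := k)
    have hAk : (2:ℝ) ^ k ≤ A := by
      have hh : ((k:ℝ)) * Real.log 2 ≤ Real.log A := by nlinarith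
      have := Real.exp_le_exp.mpr hh
      rw [Real.exp_log hA0] at this
      calc (2:ℝ)^k = Real.exp (k * Real.log 2) := by
            rw [Real.exp_nat_mul, Real.exp_log (by norm_num)]
          _ ≤ A := this
    have : (k:ℝ) ≤ A := by linarith
    exact_mod_cast this
  have hℓS : ℓ ∈ S := hℓ ▸ Nat.sSup_mem hSne hbdd
  have hkey := key ℓ hℓS
  have hℓle : (ℓ:ℝ) ≤ Real.log A / Real.log 2 := by
    rw [le_div_iff₀ hlog2]; nlinarith
  have hδℓ : δ * ℓ ≤ 1/2 := by
    have h1 : δ * ℓ ≤ δ * (Real.log A / Real.log 2) :=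
      mul_le_mul_of_nonneg_left hℓle (le_of_lt hδpos)
    have h2 : δ * (Real.log A / Real.log 2) = 1/2 := by
      rw [hδ]; field_simp
    linarith
  have hceil : (A:ℝ) * (1-δ)^ℓ / 2^ℓ ≤ nl := hnl ▸ Nat.le_ceil _
  have h2ℓ : (0:ℝ) < 2^ℓ := by positivity
  have hprod : (A:ℝ) * (1-δ)^ℓ ≤ 2^ℓ * nl := by
    rw [div_le_iff₀ h2ℓ] at hceil; nlinarith
  have hbern : 1 + (ℓ:ℝ) * (-δ) ≤ (1 + (-δ))^ℓ :=
    one_add_mul_le_pow (by linarith) ℓ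
  have hbern' : 1 - (1-δ)^ℓ ≤ δ * ℓ := by
    have : (1 + (-δ))^ℓ = (1-δ)^ℓ := by ring_nf
    nlinarith [this]
  refine ⟨hℓle, hδhalf, ?_, ?_, ?_⟩
  · nlinarith
  · have := mul_le_mul_of_nonneg_left hbern' hA0.le
    linarith
  · have := mul_le_mul_of_nonneg_left hδℓ hA0.le
    linarith
end
end
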